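/- For any w ∈ S_n, the set U_w = R_w · B is invariant under left multiplication by N_0, the group of upper triangular unipotent matrices with entries in o_F. -/

import Mathlib

open Matrix

variable (p : ℕ) [Fact p.Prime] (F : Type) [Field F] [Algebra ℚ_[p] F]
  [FiniteDimensional ℚ_[p] F] [Algebra ℤ_[p] F] [IsScalarTower ℤ_[p] ℚ_[p] F]

/-- The ring of integers `o_F` of the finite extension `F` of `ℚ_p`. -/
def oF : Set F := {x | x ∈ integralClosure ℤ_[p] F}

/-- The ideal `π_F o_F` of `o_F`, as a subset of `F`. -/
def piO (π : F) : Set F := {x | ∃ c ∈ oF p F, x = π * c}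

/-- The permutation matrix of `w`, with `w_{ij} = 1` iff `w(j) = i`. -/
def permMat (n : ℕ) (w : Equiv.Perm (Fin n)) : Matrix (Fin n) (Fin n) F :=
  fun i j => if w j = i then 1 else 0

/-- `R_w`: the set of matrices `(a_{ij})` with `a_{ij} = 1` if `w⁻¹(i) = j`,
`a_{ij} = 0` if `w⁻¹(i) < j`, `a_{ij} ∈ o_F` if `w⁻¹(i) > j` and `w(j) > i`, and
`a_{ij} ∈ π_F o_F` if `w⁻¹(i) > j` and `w(j) < i`. -/
def Rw (π : F) (n : ℕ) (w : Equiv.Perm (Fin n)) : Set (Matrix (Fin n) (Fin n) F) :=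
  {a | ∀ i j : Fin n,
    (w⁻¹ i = j → a i j = 1) ∧
    (w⁻¹ i < j → a i j = 0) ∧
    (j < w⁻¹ i → i < w j → a i j ∈ oF p F) ∧
    (j < w⁻¹ i → w j < i → a i j ∈ piO p F π)}

/-- invertible upper triangular matrix (an element of the Borel `B`). -/
def IsBorel {n : ℕ} (b : Matrix (Fin n) (Fin n) F) : Prop :=
  (∀ i j : Fin n, j < i → b i j = 0) ∧ (∀ i : Fin n, b i i ≠ 0)

/-- membership in `N₀`: upper triangular unipotent with entries in `o_F`. -/
def IsN0 {n : ℕ} (m : Matrix (Fin n) (Fin n) F) : Prop :=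
  (∀ i : Fin n, m i i = 1) ∧ (∀ i j : Fin n, j < i → m i j = 0) ∧
  (∀ i j : Fin n, m i j ∈ oF p F)

set_option linter.unusedSectionVars false

section Aux


variable {π : F}

lemma oF_add {a b : F} (ha : a ∈ oF p F) (hb : b ∈ oF p F) : a + b ∈ oF p F :=
  show a + b ∈ integralClosure ℤ_[p] F from Subalgebra.add_mem _ ha hb

lemma oF_mul {a b : F} (ha : a ∈ oF p F) (hb : b ∈ oF p F) : a * b ∈ oF p F :=
  show a * b ∈ integralClosure ℤ_[p] F from Subalgebra.mul_mem _ ha hb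

lemma oF_one : (1 : F) ∈ oF p F :=
  show (1 : F) ∈ integralClosure ℤ_[p] F from Subalgebra.one_mem _

lemma oF_zero : (0 : F) ∈ oF p F :=
  show (0 : F) ∈ integralClosure ℤ_[p] F from Subalgebra.zero_mem _

lemma oF_neg {a : F} (ha : a ∈ oF p F) : -a ∈ oF p F :=
  show -a ∈ integralClosure ℤ_[p] F from Subalgebra.neg_mem _ ha

lemma oF_sub {a b : F} (ha : a ∈ oF p F) (hb : b ∈ oF p F) : a - b ∈ oF p F :=
  show a - b ∈ integralClosure ℤ_[p] F from Subalgebra.sub_mem _ ha hb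

lemma oF_pow {a : F} (ha : a ∈ oF p F) (k : ℕ) : a ^ k ∈ oF p F :=
  show a ^ k ∈ integralClosure ℤ_[p] F from pow_mem ha k

lemma oF_sum {ι : Type*} {s : Finset ι} {f : ι → F} (h : ∀ i ∈ s, f i ∈ oF p F) :
    (∑ i ∈ s, f i) ∈ oF p F :=
  Finset.sum_induction f (· ∈ oF p F) (fun _ _ => oF_add p F) (oF_zero p F) h

lemma piO_zero : (0 : F) ∈ piO p F π := ⟨0, oF_zero p F, by ring⟩

lemma piO_add {a b : F} (ha : a ∈ piO p F π) (hb : b ∈ piO p F π) : a + b ∈ piO p F π := by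
  obtain ⟨c, hc, rfl⟩ := ha; obtain ⟨d, hd, rfl⟩ := hb
  exact ⟨c + d, oF_add p F hc hd, by ring⟩

lemma piO_neg {a : F} (ha : a ∈ piO p F π) : -a ∈ piO p F π := by
  obtain ⟨c, hc, rfl⟩ := ha
  exact ⟨-c, oF_neg p F hc, by ring⟩

lemma piO_sub {a b : F} (ha : a ∈ piO p F π) (hb : b ∈ piO p F π) : a - b ∈ piO p F π := by
  obtain ⟨c, hc, rfl⟩ := ha; obtain ⟨d, hd, rfl⟩ := hb
  exact ⟨c - d, oF_sub p F hc hd, by ring⟩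

lemma oF_mul_piO {a x : F} (ha : a ∈ oF p F) (hx : x ∈ piO p F π) : a * x ∈ piO p F π := by
  obtain ⟨c, hc, rfl⟩ := hx
  exact ⟨a * c, oF_mul p F ha hc, by ring⟩

lemma piO_mul_oF {a x : F} (ha : a ∈ oF p F) (hx : x ∈ piO p F π) : x * a ∈ piO p F π := by
  rw [mul_comm]; exact oF_mul_piO p F ha hx

lemma piO_subset (hπ : π ∈ oF p F) {x : F} (hx : x ∈ piO p F π) : x ∈ oF p F := by
  obtain ⟨c, hc, rfl⟩ := hx; exact oF_mul p F hπ hc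

lemma piO_sum {ι : Type*} {s : Finset ι} {f : ι → F} (h : ∀ i ∈ s, f i ∈ piO p F π) :
    (∑ i ∈ s, f i) ∈ piO p F π :=
  Finset.sum_induction f (· ∈ piO p F π) (fun _ _ => piO_add p F) (piO_zero p F) h

lemma p_inv_not_mem : ((p : F))⁻¹ ∉ oF p F := by
  intro h
  have hcast : (p : F) = algebraMap ℚ_[p] F (p : ℚ_[p]) := by rw [map_natCast]
  have h2 : IsIntegral ℤ_[p] ((algebraMap ℚ_[p] F) ((p : ℚ_[p])⁻¹)) := by
    rw [map_inv₀, ← hcast]; exact h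
  have h3 : IsIntegral ℤ_[p] ((p : ℚ_[p])⁻¹) :=
    (isIntegral_algebraMap_iff (RingHom.injective (algebraMap ℚ_[p] F))).mp h2
  obtain ⟨z, hz⟩ := IsIntegrallyClosed.isIntegral_iff.mp h3
  have hzn : ‖(z : ℚ_[p])‖ ≤ 1 := z.2
  have hp2 : (1 : ℝ) < (p : ℝ) := by
    have := (Fact.out : p.Prime).two_le
    exact_mod_cast Nat.lt_of_lt_of_le (by norm_num) this
  have hpn : ‖((p : ℚ_[p]))⁻¹‖ = (p : ℝ) := by
    rw [norm_inv, Padic.norm_p, inv_inv]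
  have : algebraMap ℤ_[p] ℚ_[p] z = (z : ℚ_[p]) := rfl
  rw [this] at hz
  rw [hz, hpn] at hzn
  linarith

lemma pi_pow_mem (hπ : π ∈ oF p F) (hinv : π⁻¹ ∈ oF p F) (m : ℤ) : π ^ m ∈ oF p F := by
  rcases m with k | k
  · rw [Int.ofNat_eq_coe, zpow_natCast]; exact oF_pow p F hπ k
  · rw [zpow_negSucc, ← inv_pow]; exact oF_pow p F hinv (k + 1)

lemma not_pi_degenerate (hπ : π ∈ oF p F)
    (hunif : ∀ x : F, x ≠ 0 →
      ∃ (m : ℤ) (u : F), u ∈ oF p F ∧ u⁻¹ ∈ oF p F ∧ x = u * π ^ m) :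
    ¬ (π = 0 ∨ π⁻¹ ∈ oF p F) := by
  intro h
  apply p_inv_not_mem p F
  have hcast : (p : F) = algebraMap ℚ_[p] F (p : ℚ_[p]) := by rw [map_natCast]
  have hp0 : (p : F) ≠ 0 := by
    rw [hcast]
    intro hc
    have := RingHom.injective (algebraMap ℚ_[p] F) (by rw [hc, map_zero] : algebraMap ℚ_[p] F (p : ℚ_[p]) = algebraMap ℚ_[p] F 0)
    exact (Nat.cast_ne_zero.mpr (Fact.out : p.Prime).ne_zero) this
  obtain ⟨m, u, hu, hui, he⟩ := hunif (p : F) hp0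
  rcases h with h | h
  · subst h
    rcases eq_or_ne m 0 with hm | hm
    · rw [hm, zpow_zero, mul_one] at he
      rw [he]; exact hui
    · rw [_root_.zero_zpow m hm, mul_zero] at he
      exact absurd he hp0
  · have : ((p : F))⁻¹ = u⁻¹ * π ^ (-m) := by rw [he, mul_inv, ← _root_.zpow_neg]
    rw [this]
    exact oF_mul p F hui (pi_pow_mem p F hπ h (-m))

lemma near_one_unit (hπ : π ∈ oF p F)
    (hunif : ∀ x : F, x ≠ 0 →
      ∃ (m : ℤ) (u : F), u ∈ oF p F ∧ u⁻¹ ∈ oF p F ∧ x = u * π ^ m)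
    {x : F} (hx : x - 1 ∈ piO p F π) : x ≠ 0 ∧ x⁻¹ ∈ oF p F := by
  have hnd := not_pi_degenerate p F hπ hunif
  have hπ0 : π ≠ 0 := fun h => hnd (Or.inl h)
  have hπi : π⁻¹ ∉ oF p F := fun h => hnd (Or.inr h)
  obtain ⟨a, ha, hxa⟩ := hx
  have hxe : x = 1 + π * a := by linear_combination hxa
  have hx0 : x ≠ 0 := by
    intro h
    apply hπi
    have h1 : π * (-a) = 1 := by rw [hxe] at h; linear_combination -h
    rw [← eq_inv_of_mul_eq_one_right h1]
    exact oF_neg p F ha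
  refine ⟨hx0, ?_⟩
  obtain ⟨m, u, hu, hui, he⟩ := hunif x hx0
  rcases le_or_gt m 0 with hm | hm
  · obtain ⟨k, hk⟩ : ∃ k : ℕ, -m = (k : ℤ) := ⟨(-m).toNat, by omega⟩
    have h1 : x⁻¹ = u⁻¹ * π ^ (-m) := by rw [he, mul_inv, ← _root_.zpow_neg]
    rw [h1, hk, zpow_natCast]
    exact oF_mul p F hui (oF_pow p F hπ _)
  · exfalso
    apply hπi
    obtain ⟨k, hk⟩ : ∃ k : ℕ, m = (k : ℤ) + 1 := ⟨(m - 1).toNat, by omega⟩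
    subst hk
    have hxp : x = π * (u * π ^ k) := by
      rw [he, zpow_add₀ hπ0, zpow_natCast, zpow_one]; ring
    have h1 : π * (u * π ^ k - a) = 1 := by
      rw [mul_sub, ← hxp, hxe]; ring
    rw [← eq_inv_of_mul_eq_one_right h1]
    exact oF_sub p F (oF_mul p F hu (oF_pow p F hπ _)) ha

end Aux

section MatrixAux

variable {π : F} {n : ℕ} {w : Equiv.Perm (Fin n)}

/-- Invariant for the column elimination. -/
def Good (π : F) {n : ℕ} (w : Equiv.Perm (Fin n)) (k : ℕ)
    (g : Matrix (Fin n) (Fin n) F) : Prop :=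
  (∀ i m : Fin n, g i m ∈ oF p F) ∧
  (∀ i m : Fin n, w m < i → g i m ∈ piO p F π) ∧
  (∀ m : Fin n, g (w m) m - 1 ∈ piO p F π) ∧
  (∀ m : Fin n, (m : ℕ) < k → g (w m) m = 1 ∧ ∀ m' : Fin n, m < m' → g (w m) m' = 0)

lemma borel_one : IsBorel F (1 : Matrix (Fin n) (Fin n) F) := by
  constructor
  · intro i j hji
    exact Matrix.one_apply_ne (Ne.symm (ne_of_lt hji))
  · intro i
    rw [Matrix.one_apply_eq]
    exact one_ne_zero

lemma borel_mul {b c : Matrix (Fin n) (Fin n) F} (hb : IsBorel F b) (hc : IsBorel F c) :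
    IsBorel F (b * c) := by
  constructor
  · intro i j hji
    rw [Matrix.mul_apply]
    apply Finset.sum_eq_zero
    intro t _
    rcases lt_or_ge t i with ht | ht
    · rw [hb.1 i t ht, zero_mul]
    · have : j < t := lt_of_lt_of_le hji ht
      rw [hc.1 t j this, mul_zero]
  · intro i
    have hdiag : (b * c) i i = b i i * c i i := by
      rw [Matrix.mul_apply]
      apply Finset.sum_eq_single i
      · intro t _ ht
        rcases lt_or_gt_of_ne ht with h | h
        · rw [hb.1 i t h, zero_mul]
        · rw [hc.1 t i h, mul_zero]
      · intro h; exact absurd (Finset.mem_univ i) h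
    rw [hdiag]
    exact mul_ne_zero (hb.2 i) (hc.2 i)

lemma borel_inv {b : Matrix (Fin n) (Fin n) F} (hb : IsBorel F b) :
    ∃ c : Matrix (Fin n) (Fin n) F, IsBorel F c ∧ b * c = 1 ∧ c * b = 1 := by
  have htri : b.BlockTriangular id := fun i j h => hb.1 i j h
  have hdet : b.det = ∏ i, b i i := Matrix.det_of_upperTriangular htri
  have hdet0 : IsUnit b.det := by
    rw [hdet]
    exact isUnit_iff_ne_zero.mpr (Finset.prod_ne_zero_iff.mpr fun i _ => hb.2 i)
  have : Invertible b := b.invertibleOfIsUnitDet hdet0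
  have hinvtri : (b⁻¹).BlockTriangular id :=
    Matrix.blockTriangular_inv_of_blockTriangular htri
  have hmul : b * b⁻¹ = 1 := Matrix.mul_nonsing_inv b hdet0
  have hmul' : b⁻¹ * b = 1 := Matrix.nonsing_inv_mul b hdet0
  refine ⟨b⁻¹, ⟨fun i j h => hinvtri h, ?_⟩, hmul, hmul'⟩
  intro i
  have hdiag : (b⁻¹ * b) i i = b⁻¹ i i * b i i := by
    rw [Matrix.mul_apply]
    apply Finset.sum_eq_single i
    · intro t _ ht
      rcases lt_or_gt_of_ne ht with h | h
      · rw [hinvtri (show id t < id i from h), zero_mul]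
      · rw [hb.1 t i h, mul_zero]
    · intro h; exact absurd (Finset.mem_univ i) h
  have h1 : b⁻¹ i i * b i i = 1 := by rw [← hdiag, hmul', Matrix.one_apply_eq]
  exact left_ne_zero_of_mul_eq_one h1

/-- One step of the column elimination. -/
lemma elim_step (hπ : π ∈ oF p F)
    (hunif : ∀ x : F, x ≠ 0 →
      ∃ (m : ℤ) (u : F), u ∈ oF p F ∧ u⁻¹ ∈ oF p F ∧ x = u * π ^ m)
    {k : ℕ} (hk : k < n) {g : Matrix (Fin n) (Fin n) F} (hg : Good p F π w k g) :
    ∃ b₁ : Matrix (Fin n) (Fin n) F, IsBorel F b₁ ∧ Good p F π w (k + 1) (g * b₁) := by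
  obtain ⟨hI1, hI2, hI3, hI4⟩ := hg
  set j : Fin n := ⟨k, hk⟩ with hj
  obtain ⟨hp00, hq⟩ := near_one_unit p F hπ hunif (hI3 j)
  have hpq : g (w j) j * (g (w j) j)⁻¹ = 1 := mul_inv_cancel₀ hp00
  set cvec : Fin n → F :=
    fun m => if m = j then (g (w j) j)⁻¹ - 1
      else if j < m then -((g (w j) j)⁻¹ * g (w j) m) else 0 with hcvec
  have hcj : cvec j = (g (w j) j)⁻¹ - 1 := by simp [hcvec]
  have hclt : ∀ m : Fin n, m < j → cvec m = 0 := by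
    intro m hm
    simp [hcvec, ne_of_lt hm, asymm hm]
  have hcgt : ∀ m : Fin n, j < m → cvec m = -((g (w j) j)⁻¹ * g (w j) m) := by
    intro m hm
    simp [hcvec, hm.ne', hm]
  have hcvec_mem : ∀ m, cvec m ∈ oF p F := by
    intro m
    simp only [hcvec]
    split
    · exact oF_sub p F hq (oF_one p F)
    · split
      · exact oF_neg p F (oF_mul p F hq (hI1 _ _))
      · exact oF_zero p F
  set E : Matrix (Fin n) (Fin n) F := Matrix.of (fun t m => if t = j then cvec m else 0) with hE
  have hEj : ∀ m, E j m = cvec m := by intro m; simp [hE]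
  have hEne : ∀ t m : Fin n, t ≠ j → E t m = 0 := by intro t m ht; simp [hE, ht]
  have key : ∀ i m : Fin n, (g * (1 + E)) i m = g i m + g i j * cvec m := by
    intro i m
    have hsum : (∑ t : Fin n, g i t * E t m) = g i j * cvec m := by
      rw [Finset.sum_eq_single j
        (fun t _ ht => by rw [hEne t m ht, mul_zero])
        (fun h => absurd (Finset.mem_univ j) h), hEj]
    rw [Matrix.mul_add, Matrix.mul_one, Matrix.add_apply, Matrix.mul_apply, hsum]
  refine ⟨1 + E, ⟨?_, ?_⟩, ?_, ?_, ?_, ?_⟩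
  · -- upper triangular
    intro i m hmi
    rw [Matrix.add_apply]
    by_cases hij : i = j
    · subst hij
      rw [Matrix.one_apply_ne (Ne.symm (ne_of_lt hmi)), hEj, hclt m hmi, add_zero]
    · rw [Matrix.one_apply_ne (Ne.symm (ne_of_lt hmi)), hEne i m hij, add_zero]
  · -- nonzero diagonal
    intro i
    rw [Matrix.add_apply, Matrix.one_apply_eq]
    by_cases hij : i = j
    · subst hij
      rw [hEj, hcj]
      have h1 : (1 : F) + ((g (w j) j)⁻¹ - 1) = (g (w j) j)⁻¹ := by ring
      rw [h1]
      exact inv_ne_zero hp00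
    · rw [hEne i i hij, add_zero]
      exact one_ne_zero
  · -- I1
    intro i m
    rw [key]
    exact oF_add p F (hI1 i m) (oF_mul p F (hI1 i j) (hcvec_mem m))
  · -- I2
    intro i m him
    rw [key]
    apply piO_add p F (hI2 i m him)
    rcases lt_trichotomy m j with hmj | hmj | hmj
    · rw [hclt m hmj, mul_zero]; exact piO_zero p F
    · rw [hmj] at him ⊢
      rw [hcj]
      exact piO_mul_oF p F (oF_sub p F hq (oF_one p F)) (hI2 i j him)
    · rw [hcgt m hmj]
      rcases lt_or_ge (w j) i with hwj | hwj
      · exact piO_mul_oF p F (oF_neg p F (oF_mul p F hq (hI1 _ _))) (hI2 i j hwj)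
      · have hwm : w m < w j := lt_of_lt_of_le him hwj
        exact oF_mul_piO p F (hI1 i j) (piO_neg p F (oF_mul_piO p F hq (hI2 (w j) m hwm)))
  · -- I3
    intro m
    rw [key]
    have hre : g (w m) m + g (w m) j * cvec m - 1
        = (g (w m) m - 1) + g (w m) j * cvec m := by ring
    rw [hre]
    apply piO_add p F (hI3 m)
    rcases lt_trichotomy m j with hmj | hmj | hmj
    · rw [hclt m hmj, mul_zero]; exact piO_zero p F
    · rw [hmj, hcj]
      have h1 : g (w j) j * ((g (w j) j)⁻¹ - 1) = -(g (w j) j - 1) := by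
        linear_combination hpq
      rw [h1]
      exact piO_neg p F (hI3 j)
    · rw [hcgt m hmj]
      have hwmj : w m ≠ w j := fun h => (ne_of_gt hmj) (w.injective h)
      rcases lt_or_gt_of_ne hwmj with h | h
      · exact oF_mul_piO p F (hI1 _ _) (piO_neg p F (oF_mul_piO p F hq (hI2 (w j) m h)))
      · exact piO_mul_oF p F (oF_neg p F (oF_mul p F hq (hI1 _ _))) (hI2 (w m) j h)
  · -- I4
    intro m hm
    rcases Nat.lt_succ_iff_lt_or_eq.mp hm with hlt | heq
    · have hmj : m < j := by
        rw [Fin.lt_def]; exact hlt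
      have old := hI4 m hlt
      constructor
      · rw [key, old.2 j hmj, zero_mul, add_zero]
        exact old.1
      · intro m' hmm'
        rw [key, old.2 m' hmm', old.2 j hmj, zero_mul, add_zero]
    · have hmj : m = j := Fin.ext heq
      constructor
      · rw [hmj, key, hcj]
        linear_combination hpq
      · intro m' hjm'
        rw [hmj] at hjm' ⊢
        rw [key, hcgt m' hjm']
        linear_combination (-(g (w j) m')) * hpq

lemma r_oF (hπ : π ∈ oF p F) {r : Matrix (Fin n) (Fin n) F} (hr : r ∈ Rw p F π n w) :
    ∀ i m : Fin n, r i m ∈ oF p F := by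
  simp only [Rw, Set.mem_setOf_eq] at hr
  intro i m
  rcases lt_trichotomy (w⁻¹ i) m with h | h | h
  · rw [(hr i m).2.1 h]; exact oF_zero p F
  · rw [(hr i m).1 h]; exact oF_one p F
  · rcases lt_trichotomy i (w m) with h2 | h2 | h2
    · exact (hr i m).2.2.1 h h2
    · exfalso
      rw [h2, Equiv.Perm.coe_inv, Equiv.symm_apply_apply] at h
      exact lt_irrefl _ h
    · exact piO_subset p F hπ ((hr i m).2.2.2 h h2)

lemma r_piO {r : Matrix (Fin n) (Fin n) F} (hr : r ∈ Rw p F π n w) :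
    ∀ i m : Fin n, w m < i → r i m ∈ piO p F π := by
  simp only [Rw, Set.mem_setOf_eq] at hr
  intro i m him
  rcases lt_trichotomy (w⁻¹ i) m with h | h | h
  · rw [(hr i m).2.1 h]; exact piO_zero p F
  · exfalso
    have hi : i = w m := by rw [← h, Equiv.Perm.coe_inv, Equiv.apply_symm_apply]
    rw [hi] at him
    exact lt_irrefl _ him
  · exact (hr i m).2.2.2 h him

lemma initial_good (hπ : π ∈ oF p F) {n₀ r : Matrix (Fin n) (Fin n) F}
    (hn₀ : IsN0 p F n₀) (hr : r ∈ Rw p F π n w) : Good p F π w 0 (n₀ * r) := by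
  obtain ⟨hd, hlow, hent⟩ := hn₀
  refine ⟨?_, ?_, ?_, fun m hm => absurd hm (Nat.not_lt_zero _)⟩
  · intro i m
    rw [Matrix.mul_apply]
    exact oF_sum p F fun t _ => oF_mul p F (hent i t) (r_oF p F hπ hr t m)
  · intro i m him
    rw [Matrix.mul_apply]
    apply piO_sum p F
    intro t _
    rcases lt_or_ge t i with ht | ht
    · rw [hlow i t ht, zero_mul]; exact piO_zero p F
    · exact oF_mul_piO p F (hent i t) (r_piO p F hr t m (lt_of_lt_of_le him ht))
  · intro m
    rw [Matrix.mul_apply]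
    have hrp : r (w m) m = 1 := by
      have := hr (w m) m
      exact this.1 (Equiv.symm_apply_apply w m)
    rw [← Finset.sum_erase_add _ _ (Finset.mem_univ (w m)), hd (w m), one_mul, hrp,
      add_sub_cancel_right]
    apply piO_sum p F
    intro t ht
    have htm : t ≠ w m := Finset.ne_of_mem_erase ht
    rcases lt_or_gt_of_ne htm with h | h
    · rw [hlow (w m) t h, zero_mul]; exact piO_zero p F
    · exact oF_mul_piO p F (hent _ _) (r_piO p F hr t m h)

lemma elim (hπ : π ∈ oF p F)
    (hunif : ∀ x : F, x ≠ 0 →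
      ∃ (m : ℤ) (u : F), u ∈ oF p F ∧ u⁻¹ ∈ oF p F ∧ x = u * π ^ m) :
    ∀ t k : ℕ, k + t = n → ∀ g : Matrix (Fin n) (Fin n) F, Good p F π w k g →
      ∃ b₀ : Matrix (Fin n) (Fin n) F, IsBorel F b₀ ∧ g * b₀ ∈ Rw p F π n w := by
  intro t
  induction t with
  | zero =>
    intro k hk g hg
    refine ⟨1, borel_one F, ?_⟩
    rw [mul_one]
    obtain ⟨hI1, hI2, hI3, hI4⟩ := hg
    simp only [Rw, Set.mem_setOf_eq]
    intro i m
    refine ⟨?_, ?_, fun _ _ => hI1 i m, fun _ h2 => hI2 i m h2⟩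
    · intro h
      have hi : i = w m := by rw [← h, Equiv.Perm.coe_inv, Equiv.apply_symm_apply]
      rw [hi]
      exact (hI4 m (by have := m.isLt; omega)).1
    · intro h
      have hi : i = w (w⁻¹ i) := (Equiv.apply_symm_apply w i).symm
      rw [hi]
      exact (hI4 (w⁻¹ i) (by have := (w⁻¹ i).isLt; omega)).2 m h
  | succ t IH =>
    intro k hk g hg
    have hkn : k < n := by omega
    obtain ⟨b₁, hb₁, hg'⟩ := elim_step p F hπ hunif hkn hg
    obtain ⟨b₂, hb₂, hfin⟩ := IH (k + 1) (by omega) (g * b₁) hg'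
    exact ⟨b₁ * b₂, borel_mul F hb₁ hb₂, by rw [← mul_assoc]; exact hfin⟩

end MatrixAux


/-- for any `w ∈ Sₙ`, the set `U_w = R_w · B` is invariant under
left multiplication by `N₀`. -/
theorem stmt11 (n : ℕ) (π : F) (hπ : π ∈ oF p F)
    (hunif : ∀ x : F, x ≠ 0 →
      ∃ (m : ℤ) (u : F), u ∈ oF p F ∧ u⁻¹ ∈ oF p F ∧ x = u * π ^ m)
    (w : Equiv.Perm (Fin n)) (n₀ : Matrix (Fin n) (Fin n) F) (hn₀ : IsN0 p F n₀)
    (r b : Matrix (Fin n) (Fin n) F) (hr : r ∈ Rw p F π n w) (hb : IsBorel F b) :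
    ∃ (r' b' : Matrix (Fin n) (Fin n) F),
      r' ∈ Rw p F π n w ∧ IsBorel F b' ∧ n₀ * (r * b) = r' * b' := by
  have hG := initial_good p F hπ hn₀ hr
  obtain ⟨b₀, hb₀, hrw⟩ := elim p F hπ hunif n 0 (by omega) (n₀ * r) hG
  obtain ⟨c, hc, hbc, hcb⟩ := borel_inv F hb₀
  refine ⟨(n₀ * r) * b₀, c * b, hrw, borel_mul F hc hb, ?_⟩
  rw [mul_assoc (n₀ * r) b₀ (c * b), ← mul_assoc b₀ c b, hbc, one_mul, mul_assoc]
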